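/- Per-policy variance reduction (RL setting, single-trajectory comparison): for every k, t ∈ {0,…,T−1}, and s ∈ 𝒮, if for all k, t, s: sqrt(η̄_t/η̲_t) (Σ_a π^(k)_t(a|s) sqrt(ĥq_{π^(k),t}(s,a)))² ≤ Σ_a π^(k)_t(a|s) ĥq_{π^(k),t}(s,a), then V(G^PDIS_k(τ^{ĥμ_{t:T−1}}_{t:T−1}) | S_t = s) ≤ V(G^PDIS_k(τ^{π^(k)_{t:T−1}}_{t:T−1}) | S_t = s). -/

import Mathlib

open Finset

section RL

variable {S A : Type*}

/-- Expectation, over the random trajectory of length `h` generated from time `t` and state `s`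
by the behavior policy `μ` in the MDP with transition kernel `p`, of a functional `f` of the
trajectory (recorded as the list of successive (action, next-state) pairs).  This is the finite
sum over all trajectories weighted by their probabilities; trajectories of zero probability
contribute `0`. -/
noncomputable def Etraj [Fintype S] [Fintype A] (p : S → A → S → ℝ)
    (μ : ℕ → S → A → ℝ) : ℕ → ℕ → S → (List (A × S) → ℝ) → ℝ
  | 0, _, _, f => f []
  | h + 1, t, s, f =>
      ∑ a : A, ∑ s' : S,
        μ t s a * p s a s' * Etraj p μ h (t + 1) s' (fun l => f ((a, s') :: l))

/-- Total (undiscounted) reward `Σ_i R_{i+1}` along a trajectory starting from state `s`. -/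
noncomputable def retF (r : S → A → ℝ) : S → List (A × S) → ℝ
  | _, [] => 0
  | s, (a, s') :: l => r s a + retF r s' l

/-- The PDIS return `G^PDIS(τ^{μ_{t:T-1}}_{t:T-1}) = Σ_i (∏_{j=t}^i ρ^{π,μ}_j) R_{i+1}` of a
trajectory starting at time `t` in state `s`, with target policy `π` and behavior policy `μ`,
in its recursive form. -/
noncomputable def pdisF (r : S → A → ℝ) (π μ : ℕ → S → A → ℝ) :
    ℕ → S → List (A × S) → ℝ
  | _, _, [] => 0
  | t, s, (a, s') :: l => π t s a / μ t s a * (r s a + pdisF r π μ (t + 1) s' l)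

/-- State value function `v_{π,t}(s) = E_π[Σ_{i=t+1}^T R_i | S_t = s]` for horizon `T`. -/
noncomputable def vval [Fintype S] [Fintype A] (p : S → A → S → ℝ) (r : S → A → ℝ)
    (π : ℕ → S → A → ℝ) (T t : ℕ) (s : S) : ℝ :=
  Etraj p π (T - t) t s (retF r s)

/-- Action value function `q_{π,t}(s,a) = E_π[Σ_{i=t+1}^T R_i | S_t = s, A_t = a]`. -/
noncomputable def qval [Fintype S] [Fintype A] (p : S → A → S → ℝ) (r : S → A → ℝ)
    (π : ℕ → S → A → ℝ) (T t : ℕ) (s : S) (a : A) : ℝ :=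
  r s a + ∑ s' : S, p s a s' * vval p r π T (t + 1) s'

/-- Conditional expectation `E[G^PDIS(τ^{μ_{t:T-1}}_{t:T-1}) | S_t = s]`. -/
noncomputable def Epdis [Fintype S] [Fintype A] (p : S → A → S → ℝ) (r : S → A → ℝ)
    (π μ : ℕ → S → A → ℝ) (T t : ℕ) (s : S) : ℝ :=
  Etraj p μ (T - t) t s (pdisF r π μ t s)

/-- Conditional variance `V(G^PDIS(τ^{μ_{t:T-1}}_{t:T-1}) | S_t = s)`. -/
noncomputable def Vpdis [Fintype S] [Fintype A] (p : S → A → S → ℝ) (r : S → A → ℝ)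
    (π μ : ℕ → S → A → ℝ) (T t : ℕ) (s : S) : ℝ :=
  Etraj p μ (T - t) t s (fun l => pdisF r π μ t s l ^ 2) - Epdis p r π μ T t s ^ 2

/-- `ν_{π,t}(s,a) = V_{S'~p(·|s,a)}(v_{π,t+1}(S'))` for `t ≤ T-2`, and `ν_{π,T-1}(s,a) = 0`. -/
noncomputable def nuval [Fintype S] [Fintype A] (p : S → A → S → ℝ) (r : S → A → ℝ)
    (π : ℕ → S → A → ℝ) (T t : ℕ) (s : S) (a : A) : ℝ :=
  if t = T - 1 then 0
  else (∑ s' : S, p s a s' * vval p r π T (t + 1) s' ^ 2)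
       - (∑ s' : S, p s a s' * vval p r π T (t + 1) s') ^ 2

/-- The variance-augmented action value `ĥq_{π,t}(s,a)`:
`ĥq_{π,T-1}(s,a) = q_{π,T-1}(s,a)²` and, for `t ≤ T-2`,
`ĥq_{π,t}(s,a) = q_{π,t}(s,a)² + ν_{π,t}(s,a) + Σ_{s'} p(s'|s,a) V(G^PDIS(τ^{π_{t+1:T-1}}) | S_{t+1}=s')`. -/
noncomputable def hq [Fintype S] [Fintype A] (p : S → A → S → ℝ) (r : S → A → ℝ)
    (π : ℕ → S → A → ℝ) (T t : ℕ) (s : S) (a : A) : ℝ :=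
  if t = T - 1 then qval p r π T t s a ^ 2
  else qval p r π T t s a ^ 2 + nuval p r π T t s a
       + ∑ s' : S, p s a s' * Vpdis p r π π T (t + 1) s'

/-- The tailored behavior policy `ĥμ_t(a|s) ∝ sqrt(Σ_k π^(k)_t(a|s)² ĥq_{π^(k),t}(s,a))`,
normalized over `a ∈ 𝒜` (uniform on `𝒜` if all the weights vanish). -/
noncomputable def hmu [Fintype S] [Fintype A] (p : S → A → S → ℝ) (r : S → A → ℝ)
    (K : ℕ) (π : Fin K → ℕ → S → A → ℝ) (T t : ℕ) (s : S) (a : A) : ℝ :=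
  if (∑ b : A, Real.sqrt (∑ k : Fin K, π k t s b ^ 2 * hq p r (π k) T t s b)) = 0 then
    (Fintype.card A : ℝ)⁻¹
  else
    Real.sqrt (∑ k : Fin K, π k t s a ^ 2 * hq p r (π k) T t s a) /
      ∑ b : A, Real.sqrt (∑ k : Fin K, π k t s b ^ 2 * hq p r (π k) T t s b)

/-- `w^(k)_t(s,a) = π^(k)_t(a|s)² ĥq_{π^(k),t}(s,a)`. -/
noncomputable def wRL [Fintype S] [Fintype A] (p : S → A → S → ℝ) (r : S → A → ℝ)
    (K : ℕ) (π : Fin K → ℕ → S → A → ℝ) (T : ℕ) (k : Fin K) (t : ℕ) (s : S) (a : A) : ℝ :=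
  π k t s a ^ 2 * hq p r (π k) T t s a

/-- `η^(k)_t(s,a) = w^(k)_t(s,a) / w̄_t(s,a)` with `w̄_t(s,a) = (1/K) Σ_j w^(j)_t(s,a)`. -/
noncomputable def etaRL [Fintype S] [Fintype A] (p : S → A → S → ℝ) (r : S → A → ℝ)
    (K : ℕ) (π : Fin K → ℕ → S → A → ℝ) (T : ℕ) (k : Fin K) (t : ℕ) (s : S) (a : A) : ℝ :=
  wRL p r K π T k t s a / ((∑ j : Fin K, wRL p r K π T j t s a) / K)

/-- `η̲_t = min_{k,s,a} η^(k)_t(s,a)`. -/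
noncomputable def etaLoRL [Fintype S] [Fintype A] (p : S → A → S → ℝ) (r : S → A → ℝ)
    (K : ℕ) (π : Fin K → ℕ → S → A → ℝ) (T t : ℕ) : ℝ :=
  ⨅ x : Fin K × S × A, etaRL p r K π T x.1 t x.2.1 x.2.2

/-- `η̄_t = max_{k,s,a} η^(k)_t(s,a)`. -/
noncomputable def etaHiRL [Fintype S] [Fintype A] (p : S → A → S → ℝ) (r : S → A → ℝ)
    (K : ℕ) (π : Fin K → ℕ → S → A → ℝ) (T t : ℕ) : ℝ :=
  ⨆ x : Fin K × S × A, etaRL p r K π T x.1 t x.2.1 x.2.2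

end RL

section aux
variable {S A : Type*} [Fintype S] [Fintype A]

lemma Etraj_zero (p : S → A → S → ℝ) (μ : ℕ → S → A → ℝ) (t : ℕ) (s : S) (f : List (A × S) → ℝ) :
    Etraj p μ 0 t s f = f [] := rfl

lemma Etraj_succ (p : S → A → S → ℝ) (μ : ℕ → S → A → ℝ) (h t : ℕ) (s : S) (f : List (A × S) → ℝ) :
    Etraj p μ (h+1) t s f = ∑ a : A, ∑ s' : S,
        μ t s a * p s a s' * Etraj p μ h (t + 1) s' (fun l => f ((a, s') :: l)) := rfl

example (r : S → A → ℝ) (π μ : ℕ → S → A → ℝ) (t : ℕ) (s : S) : pdisF r π μ t s [] = 0 := rfl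
example (r : S → A → ℝ) (π μ : ℕ → S → A → ℝ) (t : ℕ) (s s' : S) (a : A) (l) :
    pdisF r π μ t s ((a,s')::l) = π t s a / μ t s a * (r s a + pdisF r π μ (t + 1) s' l) := rfl
example (r : S → A → ℝ) (s s' : S) (a : A) (l) : retF r s ((a,s')::l) = r s a + retF r s' l := rfl
end aux
section aux
variable {S A : Type*} [Fintype S] [Fintype A]

lemma Etraj_zero' (p : S → A → S → ℝ) (μ : ℕ → S → A → ℝ) (t : ℕ) (s : S) (f : List (A × S) → ℝ) :
    Etraj p μ 0 t s f = f [] := rfl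

lemma Etraj_succ' (p : S → A → S → ℝ) (μ : ℕ → S → A → ℝ) (h t : ℕ) (s : S) (f : List (A × S) → ℝ) :
    Etraj p μ (h+1) t s f = ∑ a : A, ∑ s' : S,
        μ t s a * p s a s' * Etraj p μ h (t + 1) s' (fun l => f ((a, s') :: l)) := rfl

lemma Etraj_congr' (p : S → A → S → ℝ) (μ : ℕ → S → A → ℝ) (h t : ℕ) (s : S)
    {f g : List (A × S) → ℝ} (hfg : ∀ l, f l = g l) :
    Etraj p μ h t s f = Etraj p μ h t s g := by
  have : f = g := funext hfg
  rw [this]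

lemma Etraj_add' (p : S → A → S → ℝ) (μ : ℕ → S → A → ℝ) :
    ∀ (h t : ℕ) (s : S) (f g : List (A × S) → ℝ),
      Etraj p μ h t s (fun l => f l + g l) = Etraj p μ h t s f + Etraj p μ h t s g := by
  intro h
  induction h with
  | zero => intro t s f g; rfl
  | succ h ih =>
    intro t s f g
    simp only [Etraj_succ', ← Finset.sum_add_distrib]
    refine Finset.sum_congr rfl fun a _ => Finset.sum_congr rfl fun s' _ => ?_
    rw [← mul_add, ← ih]

lemma Etraj_smul' (p : S → A → S → ℝ) (μ : ℕ → S → A → ℝ) :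
    ∀ (h t : ℕ) (s : S) (c : ℝ) (f : List (A × S) → ℝ),
      Etraj p μ h t s (fun l => c * f l) = c * Etraj p μ h t s f := by
  intro h
  induction h with
  | zero => intro t s c f; rfl
  | succ h ih =>
    intro t s c f
    simp only [Etraj_succ', Finset.mul_sum]
    refine Finset.sum_congr rfl fun a _ => Finset.sum_congr rfl fun s' _ => ?_
    rw [show (fun l => (fun l' => c * f l') ((a, s') :: l)) = fun l => c * f ((a,s')::l) from rfl,
      ih]
    ring

lemma Etraj_const' (p : S → A → S → ℝ) (μ : ℕ → S → A → ℝ)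
    (hp1 : ∀ s a, ∑ s' : S, p s a s' = 1) :
    ∀ (h t : ℕ) (s : S) (c : ℝ),
      (∀ t' s', t ≤ t' → t' < t + h → ∑ a : A, μ t' s' a = 1) →
      Etraj p μ h t s (fun _ => c) = c := by
  intro h
  induction h with
  | zero => intro t s c _; rfl
  | succ h ih =>
    intro t s c hμ
    simp only [Etraj_succ']
    have hrec : ∀ (a : A) (s' : S),
        Etraj p μ h (t+1) s' (fun _ => c) = c := by
      intro a s'
      exact ih (t+1) s' c (fun t' s'' h1 h2 => hμ t' s'' (le_of_lt (Nat.lt_of_succ_le h1))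
        (by omega))
    calc (∑ a : A, ∑ s' : S, μ t s a * p s a s' *
          Etraj p μ h (t+1) s' (fun _ => c))
        = ∑ a : A, μ t s a * c := by
          refine Finset.sum_congr rfl fun a _ => ?_
          rw [show (∑ s' : S, μ t s a * p s a s' * Etraj p μ h (t+1) s' (fun _ => c))
              = ∑ s' : S, μ t s a * c * p s a s' from
            Finset.sum_congr rfl (fun s' _ => by rw [hrec a s']; ring)]
          rw [← Finset.mul_sum, hp1]
          ring
      _ = c := by rw [← Finset.sum_mul, hμ t s le_rfl (by omega), one_mul]

lemma Etraj_mono' (p : S → A → S → ℝ) (μ : ℕ → S → A → ℝ)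
    (hp0 : ∀ s a s', 0 ≤ p s a s') :
    ∀ (h t : ℕ) (s : S) (f g : List (A × S) → ℝ),
      (∀ t' s' a, t ≤ t' → t' < t + h → 0 ≤ μ t' s' a) →
      (∀ l, f l ≤ g l) →
      Etraj p μ h t s f ≤ Etraj p μ h t s g := by
  intro h
  induction h with
  | zero => intro t s f g _ hfg; exact hfg []
  | succ h ih =>
    intro t s f g hμ hfg
    simp only [Etraj_succ']
    refine Finset.sum_le_sum fun a _ => Finset.sum_le_sum fun s' _ => ?_
    refine mul_le_mul_of_nonneg_left ?_
      (mul_nonneg (hμ t s a le_rfl (by omega)) (hp0 s a s'))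
    exact ih (t+1) s' _ _ (fun t' s'' b h1 h2 => hμ t' s'' b (by omega) (by omega))
      (fun l => hfg _)

/-- Unbiasedness of PDIS: the expected PDIS return under behavior policy `μ` equals the
expected return under the target policy `π`. -/
lemma Etraj_pdis (p : S → A → S → ℝ) (r : S → A → ℝ)
    (hp1 : ∀ s a, ∑ s' : S, p s a s' = 1) (π μ : ℕ → S → A → ℝ) :
    ∀ (h t : ℕ) (s : S),
      (∀ t' s', t ≤ t' → t' < t + h →
        (∀ a, π t' s' a ≠ 0 → μ t' s' a ≠ 0) ∧
        (∑ a : A, μ t' s' a = 1) ∧ (∑ a : A, π t' s' a = 1)) →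
      Etraj p μ h t s (pdisF r π μ t s) = Etraj p π h t s (retF r s) := by
  intro h
  induction h with
  | zero => intro t s _; rfl
  | succ h ih =>
    intro t s hw
    simp only [Etraj_succ']
    refine Finset.sum_congr rfl fun a _ => Finset.sum_congr rfl fun s' _ => ?_
    have hw' : ∀ t' s'', t + 1 ≤ t' → t' < t + 1 + h →
        (∀ b, π t' s'' b ≠ 0 → μ t' s'' b ≠ 0) ∧
        (∑ b : A, μ t' s'' b = 1) ∧ (∑ b : A, π t' s'' b = 1) :=
      fun t' s'' h1 h2 => hw t' s'' (by omega) (by omega)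
    have e1 : Etraj p μ h (t+1) s' (fun l => pdisF r π μ t s ((a, s') :: l))
        = π t s a / μ t s a * (r s a + Etraj p μ h (t+1) s' (pdisF r π μ (t+1) s')) := by
      rw [show (fun l => pdisF r π μ t s ((a, s') :: l))
          = fun l => π t s a / μ t s a * (r s a + pdisF r π μ (t+1) s' l) from rfl]
      rw [Etraj_smul']
      congr 1
      rw [show (fun l => r s a + pdisF r π μ (t+1) s' l)
          = fun l => (fun _ => r s a) l + pdisF r π μ (t+1) s' l from rfl, Etraj_add',
        Etraj_const' p μ hp1 h (t+1) s' (r s a) (fun t' s'' h1 h2 => (hw' t' s'' h1 h2).2.1)]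
    have e2 : Etraj p π h (t+1) s' (fun l => retF r s ((a, s') :: l))
        = r s a + Etraj p π h (t+1) s' (retF r s') := by
      rw [show (fun l => retF r s ((a, s') :: l))
          = fun l => (fun _ => r s a) l + retF r s' l from rfl, Etraj_add',
        Etraj_const' p π hp1 h (t+1) s' (r s a) (fun t' s'' h1 h2 => (hw' t' s'' h1 h2).2.2)]
    rw [e1, e2, ih (t+1) s' hw']
    rcases eq_or_ne (π t s a) 0 with h0 | h0
    · simp [h0]
    · have hμ0 : μ t s a ≠ 0 := (hw t s le_rfl (by omega)).1 a h0
      field_simp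

end aux
section aux2
variable {S A : Type*} [Fintype S] [Fintype A]

lemma hmu_sum_one [Nonempty A] (p : S → A → S → ℝ) (r : S → A → ℝ)
    (K : ℕ) (π : Fin K → ℕ → S → A → ℝ) (T t : ℕ) (s : S) :
    ∑ a : A, hmu p r K π T t s a = 1 := by
  unfold hmu
  by_cases h : (∑ b : A, Real.sqrt (∑ k : Fin K, π k t s b ^ 2 * hq p r (π k) T t s b)) = 0
  · simp only [h, if_true]
    rw [Finset.sum_const, Finset.card_univ, nsmul_eq_mul]
    rw [mul_inv_cancel₀]
    exact_mod_cast Fintype.card_ne_zero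
  · simp only [h, if_false]
    rw [← Finset.sum_div, div_self h]

lemma hmu_nonneg [Nonempty A] (p : S → A → S → ℝ) (r : S → A → ℝ)
    (K : ℕ) (π : Fin K → ℕ → S → A → ℝ) (T t : ℕ) (s : S) (a : A) :
    0 ≤ hmu p r K π T t s a := by
  unfold hmu
  by_cases h : (∑ b : A, Real.sqrt (∑ k : Fin K, π k t s b ^ 2 * hq p r (π k) T t s b)) = 0
  · simp only [h, if_true]; positivity
  · simp only [h, if_false]
    have hZ : 0 < ∑ b : A, Real.sqrt (∑ k : Fin K, π k t s b ^ 2 * hq p r (π k) T t s b) :=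
      lt_of_le_of_ne (Finset.sum_nonneg fun b _ => Real.sqrt_nonneg _) (Ne.symm h)
    exact div_nonneg (Real.sqrt_nonneg _) hZ.le

lemma hmu_eq_pos [Nonempty A] (p : S → A → S → ℝ) (r : S → A → ℝ)
    (K : ℕ) (π : Fin K → ℕ → S → A → ℝ) (T t : ℕ) (s : S)
    (hS : ∀ a : A, 0 < ∑ k : Fin K, π k t s a ^ 2 * hq p r (π k) T t s a) :
    ∀ a : A, hmu p r K π T t s a
      = Real.sqrt (∑ k : Fin K, π k t s a ^ 2 * hq p r (π k) T t s a) /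
          (∑ b : A, Real.sqrt (∑ k : Fin K, π k t s b ^ 2 * hq p r (π k) T t s b))
      ∧ 0 < hmu p r K π T t s a := by
  have hZ : 0 < ∑ b : A, Real.sqrt (∑ k : Fin K, π k t s b ^ 2 * hq p r (π k) T t s b) := by
    apply Finset.sum_pos (fun b _ => Real.sqrt_pos.2 (hS b))
    exact ⟨Classical.arbitrary A, Finset.mem_univ _⟩
  intro a
  have hdef : hmu p r K π T t s a
      = Real.sqrt (∑ k : Fin K, π k t s a ^ 2 * hq p r (π k) T t s a) /
          (∑ b : A, Real.sqrt (∑ k : Fin K, π k t s b ^ 2 * hq p r (π k) T t s b)) := by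
    unfold hmu
    rw [if_neg (ne_of_gt hZ)]
  exact ⟨hdef, hdef ▸ div_pos (Real.sqrt_pos.2 (hS a)) hZ⟩

/-- The key per-step inequality: under the similarity condition, the `ĥμ`-weighted second
moment is at most the on-policy one. -/
lemma key_ineq [Nonempty S] [Nonempty A] (p : S → A → S → ℝ) (r : S → A → ℝ)
    (T : ℕ) (K : ℕ) (hK : 0 < K) (π : Fin K → ℕ → S → A → ℝ)
    (k : Fin K) (t : ℕ) (s : S)
    (hwbar : ∀ (s : S) (a : A), 0 < (∑ j : Fin K, wRL p r K π T j t s a) / K)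
    (hlo : 0 < etaLoRL p r K π T t)
    (hcond :
      Real.sqrt (etaHiRL p r K π T t / etaLoRL p r K π T t) *
          (∑ a : A, π k t s a * Real.sqrt (hq p r (π k) T t s a)) ^ 2
        ≤ ∑ a : A, π k t s a * hq p r (π k) T t s a)
    (hπ0 : ∀ a, 0 ≤ π k t s a) :
    ∑ a : A, π k t s a ^ 2 * hq p r (π k) T t s a / hmu p r K π T t s a
      ≤ ∑ a : A, π k t s a * hq p r (π k) T t s a := by
  have hKR : (0:ℝ) < K := by exact_mod_cast hK
  set w : A → ℝ := fun a => wRL p r K π T k t s a with hw_def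
  set Sa : A → ℝ := fun a => ∑ j : Fin K, wRL p r K π T j t s a with hSa_def
  have hSa : ∀ a, 0 < Sa a := fun a => by
    have := hwbar s a
    have := div_pos_iff.1 this
    rcases this with ⟨h1, _⟩ | ⟨_, h2⟩
    · exact h1
    · exact absurd hKR (not_lt.2 h2.le)
  -- eta bounds
  have hbdd_below : BddBelow (Set.range fun x : Fin K × S × A =>
      etaRL p r K π T x.1 t x.2.1 x.2.2) := (Set.finite_range _).bddBelow
  have hbdd_above : BddAbove (Set.range fun x : Fin K × S × A =>
      etaRL p r K π T x.1 t x.2.1 x.2.2) := (Set.finite_range _).bddAbove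
  have hη_lo : ∀ a, etaLoRL p r K π T t ≤ etaRL p r K π T k t s a := fun a =>
    ciInf_le hbdd_below (⟨k, s, a⟩ : Fin K × S × A)
  have hη_hi : ∀ a, etaRL p r K π T k t s a ≤ etaHiRL p r K π T t := fun a =>
    le_ciSup hbdd_above (⟨k, s, a⟩ : Fin K × S × A)
  set ηlo := etaLoRL p r K π T t
  set ηhi := etaHiRL p r K π T t
  have hηhi : 0 < ηhi :=
    lt_of_lt_of_le hlo (le_trans (hη_lo (Classical.arbitrary A)) (hη_hi _))
  -- w bounds
  have hwSa : ∀ a, w a = etaRL p r K π T k t s a * (Sa a / K) := by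
    intro a
    have : Sa a / K ≠ 0 := ne_of_gt (hwbar s a)
    rw [etaRL, div_mul_cancel₀ _ this]
  have hw_pos : ∀ a, 0 < w a := fun a => by
    rw [hwSa a]
    exact mul_pos (lt_of_lt_of_le hlo (hη_lo a)) (hwbar s a)
  have hb1 : ∀ a, w a ≤ ηhi * (Sa a / K) := fun a => by
    rw [hwSa a]; exact mul_le_mul_of_nonneg_right (hη_hi a) (hwbar s a).le
  have hb2 : ∀ a, ηlo * (Sa a / K) ≤ w a := fun a => by
    rw [hwSa a]; exact mul_le_mul_of_nonneg_right (hη_lo a) (hwbar s a).le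
  -- hmu formula
  have hSsum : ∀ a : A, (∑ j : Fin K, π j t s a ^ 2 * hq p r (π j) T t s a) = Sa a := by
    intro a; rfl
  have hmu_eq := hmu_eq_pos p r K π T t s (fun a => (hSsum a) ▸ hSa a)
  set Z : ℝ := ∑ b : A, Real.sqrt (∑ k : Fin K, π k t s b ^ 2 * hq p r (π k) T t s b) with hZdef
  have hZ_eq : Z = ∑ b : A, Real.sqrt (Sa b) := by
    refine Finset.sum_congr rfl fun b _ => by rw [hSsum b]
  have hZ_pos : 0 < Z := by
    rw [hZ_eq]
    exact Finset.sum_pos (fun b _ => Real.sqrt_pos.2 (hSa b)) ⟨Classical.arbitrary A, Finset.mem_univ _⟩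
  -- rewrite LHS
  have hLHS : ∑ a : A, π k t s a ^ 2 * hq p r (π k) T t s a / hmu p r K π T t s a
      = Z * ∑ a : A, w a / Real.sqrt (Sa a) := by
    rw [Finset.mul_sum]
    refine Finset.sum_congr rfl fun a _ => ?_
    rw [(hmu_eq a).1, hSsum a]
    have h1 : Real.sqrt (Sa a) ≠ 0 := ne_of_gt (Real.sqrt_pos.2 (hSa a))
    have h2 : Z ≠ 0 := ne_of_gt hZ_pos
    have : π k t s a ^ 2 * hq p r (π k) T t s a = w a := rfl
    rw [this]
    field_simp
  rw [hLHS]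
  -- per-term bounds
  have stepA : ∀ a, w a / Real.sqrt (Sa a) ≤ Real.sqrt (ηhi / K) * Real.sqrt (w a) := by
    intro a
    rw [div_le_iff₀ (Real.sqrt_pos.2 (hSa a))]
    have hsq : w a ^ 2 ≤ ηhi / K * w a * Sa a := by
      have := mul_le_mul_of_nonneg_right (hb1 a) (hw_pos a).le
      calc w a ^ 2 = w a * w a := pow_two (w a)
        _ ≤ ηhi * (Sa a / K) * w a := this
        _ = ηhi / K * w a * Sa a := by ring
    calc w a = Real.sqrt (w a ^ 2) := (Real.sqrt_sq (hw_pos a).le).symm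
      _ ≤ Real.sqrt (ηhi / K * w a * Sa a) := Real.sqrt_le_sqrt hsq
      _ = Real.sqrt (ηhi / K) * Real.sqrt (w a) * Real.sqrt (Sa a) := by
          rw [Real.sqrt_mul (mul_nonneg (div_nonneg hηhi.le hKR.le) (hw_pos a).le),
            Real.sqrt_mul (div_nonneg hηhi.le hKR.le)]
  have stepB : Z ≤ Real.sqrt (K / ηlo) * ∑ b : A, Real.sqrt (w b) := by
    rw [hZ_eq, Finset.mul_sum]
    refine Finset.sum_le_sum fun b _ => ?_
    have hSb : Sa b ≤ K / ηlo * w b := by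
      have := mul_le_mul_of_nonneg_left (hb2 b) (div_pos hKR hlo).le
      calc Sa b = K / ηlo * (ηlo * (Sa b / K)) := by field_simp
        _ ≤ K / ηlo * w b := this
    calc Real.sqrt (Sa b) ≤ Real.sqrt (K / ηlo * w b) := Real.sqrt_le_sqrt hSb
      _ = Real.sqrt (K / ηlo) * Real.sqrt (w b) := Real.sqrt_mul (div_pos hKR hlo).le _
  have hsum_nonneg : 0 ≤ ∑ a : A, w a / Real.sqrt (Sa a) :=
    Finset.sum_nonneg fun a _ => div_nonneg (hw_pos a).le (Real.sqrt_nonneg _)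
  have hstep : Z * ∑ a : A, w a / Real.sqrt (Sa a)
      ≤ (Real.sqrt (K / ηlo) * ∑ b : A, Real.sqrt (w b)) *
        (Real.sqrt (ηhi / K) * ∑ a : A, Real.sqrt (w a)) := by
    apply mul_le_mul stepB
    · calc (∑ a : A, w a / Real.sqrt (Sa a))
          ≤ ∑ a : A, Real.sqrt (ηhi / K) * Real.sqrt (w a) :=
            Finset.sum_le_sum fun a _ => stepA a
        _ = Real.sqrt (ηhi / K) * ∑ a : A, Real.sqrt (w a) := by rw [Finset.mul_sum]
    · exact hsum_nonneg
    · positivity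
  refine le_trans hstep ?_
  have hcomb : (Real.sqrt (K / ηlo) * ∑ b : A, Real.sqrt (w b)) *
        (Real.sqrt (ηhi / K) * ∑ a : A, Real.sqrt (w a))
      = Real.sqrt (ηhi / ηlo) * (∑ a : A, Real.sqrt (w a)) ^ 2 := by
    have h1 : Real.sqrt (K / ηlo) * Real.sqrt (ηhi / K) = Real.sqrt (ηhi / ηlo) := by
      rw [← Real.sqrt_mul (div_pos hKR hlo).le]
      congr 1
      field_simp
    calc (Real.sqrt (K / ηlo) * ∑ b : A, Real.sqrt (w b)) *
          (Real.sqrt (ηhi / K) * ∑ a : A, Real.sqrt (w a))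
        = (Real.sqrt (K / ηlo) * Real.sqrt (ηhi / K)) * (∑ a : A, Real.sqrt (w a)) ^ 2 := by
          ring
      _ = Real.sqrt (ηhi / ηlo) * (∑ a : A, Real.sqrt (w a)) ^ 2 := by rw [h1]
  rw [hcomb]
  have hWsum : (∑ a : A, Real.sqrt (w a)) = ∑ a : A, π k t s a * Real.sqrt (hq p r (π k) T t s a) := by
    refine Finset.sum_congr rfl fun a _ => ?_
    have : w a = π k t s a ^ 2 * hq p r (π k) T t s a := rfl
    rw [this, Real.sqrt_mul (sq_nonneg _), Real.sqrt_sq (hπ0 a)]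
  rw [hWsum]
  exact hcond
end aux2
section aux3
variable {S A : Type*} [Fintype S] [Fintype A]

/-- Identity: `ĥq_{π,t}(s,a) = Σ_{s'} p(s'|s,a)(r(s,a)² + 2 r(s,a) v_{π,t+1}(s') + M_{π,t+1}(s'))`
where `M` is the on-policy second moment of the PDIS return. -/
lemma hq_eq (p : S → A → S → ℝ) (r : S → A → ℝ)
    (hp1 : ∀ s a, ∑ s' : S, p s a s' = 1)
    (T : ℕ) (π : ℕ → S → A → ℝ)
    (hπ : ∀ t s, t < T → (∀ a, 0 ≤ π t s a) ∧ (∑ a : A, π t s a = 1))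
    (t : ℕ) (ht : t < T) (s : S) (a : A) :
    hq p r π T t s a
      = ∑ s' : S, p s a s' *
          (r s a ^ 2 + 2 * r s a * Etraj p π (T - (t+1)) (t+1) s' (retF r s')
            + Etraj p π (T - (t+1)) (t+1) s' (fun l => pdisF r π π (t+1) s' l ^ 2)) := by
  have hwin : ∀ t' s'', t + 1 ≤ t' → t' < t + 1 + (T - (t+1)) →
      (∀ b, π t' s'' b ≠ 0 → π t' s'' b ≠ 0) ∧
      (∑ b : A, π t' s'' b = 1) ∧ (∑ b : A, π t' s'' b = 1) := by
    intro t' s'' h1 h2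
    have ht' : t' < T := by omega
    exact ⟨fun b hb => hb, (hπ t' s'' ht').2, (hπ t' s'' ht').2⟩
  have hv : ∀ s' : S, Etraj p π (T - (t+1)) (t+1) s' (pdisF r π π (t+1) s')
      = Etraj p π (T - (t+1)) (t+1) s' (retF r s') := fun s' =>
    Etraj_pdis p r hp1 π π (T - (t+1)) (t+1) s' hwin
  by_cases hT1 : t = T - 1
  · have h0 : T - (t+1) = 0 := by omega
    rw [hq, if_pos hT1]
    have hvv : ∀ s' : S, vval p r π T (t+1) s' = 0 := by
      intro s'
      rw [vval, h0, Etraj_zero']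
      rfl
    have hM0 : ∀ s' : S,
        Etraj p π (T - (t+1)) (t+1) s' (fun l => pdisF r π π (t+1) s' l ^ 2) = 0 := by
      intro s'
      rw [h0, Etraj_zero']
      show (0:ℝ) ^ 2 = 0
      norm_num
    have hv0 : ∀ s' : S, Etraj p π (T - (t+1)) (t+1) s' (retF r s') = 0 := by
      intro s'
      rw [h0]
      rfl
    have : qval p r π T t s a = r s a := by
      rw [qval]
      simp [hvv]
    rw [this]
    calc r s a ^ 2 = (∑ s' : S, p s a s') * r s a ^ 2 := by rw [hp1]; ring
      _ = ∑ s' : S, p s a s' *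
          (r s a ^ 2 + 2 * r s a * Etraj p π (T - (t+1)) (t+1) s' (retF r s')
            + Etraj p π (T - (t+1)) (t+1) s' (fun l => pdisF r π π (t+1) s' l ^ 2)) := by
        rw [Finset.sum_mul]
        refine Finset.sum_congr rfl fun s' _ => ?_
        rw [hv0 s', hM0 s']
        ring
  · rw [hq, if_neg hT1, nuval, if_neg hT1, qval]
    set v : S → ℝ := fun s' => vval p r π T (t+1) s' with hvdef
    set M : S → ℝ := fun s' =>
      Etraj p π (T - (t+1)) (t+1) s' (fun l => pdisF r π π (t+1) s' l ^ 2) with hMdef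
    have hvE : ∀ s' : S, Etraj p π (T - (t+1)) (t+1) s' (retF r s') = v s' := fun s' => rfl
    have hVp : ∀ s' : S, Vpdis p r π π T (t+1) s' = M s' - v s' ^ 2 := by
      intro s'
      have hE : Epdis p r π π T (t+1) s' = v s' := hv s'
      rw [Vpdis, hE]
    have e1 : (∑ s' : S, p s a s' * Vpdis p r π π T (t+1) s')
        = (∑ s' : S, p s a s' * M s') - ∑ s' : S, p s a s' * v s' ^ 2 := by
      rw [← Finset.sum_sub_distrib]
      refine Finset.sum_congr rfl fun s' _ => ?_
      rw [hVp s']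
      ring
    have e2 : (∑ s' : S, p s a s' *
          (r s a ^ 2 + 2 * r s a * Etraj p π (T - (t+1)) (t+1) s' (retF r s') + M s'))
        = r s a ^ 2 + 2 * r s a * (∑ s' : S, p s a s' * v s')
          + ∑ s' : S, p s a s' * M s' := by
      have : ∀ s' : S, p s a s' *
            (r s a ^ 2 + 2 * r s a * Etraj p π (T - (t+1)) (t+1) s' (retF r s') + M s')
          = p s a s' * r s a ^ 2 + 2 * r s a * (p s a s' * v s') + p s a s' * M s' := by
        intro s'
        rw [hvE s']
        ring
      rw [Finset.sum_congr rfl fun s' _ => this s', Finset.sum_add_distrib,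
        Finset.sum_add_distrib, ← Finset.sum_mul, hp1, ← Finset.mul_sum]
      ring
    rw [e1, e2]
    ring

/-- One-step expansion of the second moment of the PDIS return. -/
lemma Etraj_sq_expand (p : S → A → S → ℝ) (r : S → A → ℝ)
    (hp1 : ∀ s a, ∑ s' : S, p s a s' = 1) (π μ : ℕ → S → A → ℝ)
    (n t : ℕ) (s : S)
    (hwin : ∀ t' s', t + 1 ≤ t' → t' < t + 1 + n →
      (∀ b, π t' s' b ≠ 0 → μ t' s' b ≠ 0) ∧
      (∑ b : A, μ t' s' b = 1) ∧ (∑ b : A, π t' s' b = 1)) :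
    Etraj p μ (n+1) t s (fun l => pdisF r π μ t s l ^ 2)
      = ∑ a : A, ∑ s' : S, μ t s a * p s a s' * ((π t s a / μ t s a) ^ 2 *
          (r s a ^ 2 + 2 * r s a * Etraj p π n (t+1) s' (retF r s')
            + Etraj p μ n (t+1) s' (fun l => pdisF r π μ (t+1) s' l ^ 2))) := by
  rw [Etraj_succ']
  refine Finset.sum_congr rfl fun a _ => Finset.sum_congr rfl fun s' _ => ?_
  congr 1
  set c : ℝ := π t s a / μ t s a with hcdef
  set F : List (A × S) → ℝ := pdisF r π μ (t+1) s' with hFdef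
  have e0 : Etraj p μ n (t+1) s' (fun l => pdisF r π μ t s ((a, s') :: l) ^ 2)
      = Etraj p μ n (t+1) s' (fun l => c ^ 2 * (r s a ^ 2 + (2 * r s a * F l + F l ^ 2))) := by
    refine Etraj_congr' p μ n (t+1) s' fun l => ?_
    show (c * (r s a + F l)) ^ 2 = _
    ring
  rw [e0, Etraj_smul']
  congr 1
  rw [show (fun l => r s a ^ 2 + (2 * r s a * F l + F l ^ 2))
      = fun l => (fun _ => r s a ^ 2) l + ((fun l' => 2 * r s a * F l' + F l' ^ 2) l) from rfl,
    Etraj_add',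
    Etraj_const' p μ hp1 n (t+1) s' _ (fun t' s'' h1 h2 => (hwin t' s'' h1 h2).2.1),
    show (fun l => 2 * r s a * F l + F l ^ 2)
      = fun l => (fun l' => 2 * r s a * F l') l + (fun l' => F l' ^ 2) l from rfl,
    Etraj_add', Etraj_smul']
  have hF : Etraj p μ n (t+1) s' F = Etraj p π n (t+1) s' (retF r s') :=
    Etraj_pdis p r hp1 π μ n (t+1) s' hwin
  rw [hF]
  ring

/-- Main induction: the second moment under `ĥμ` is bounded by the on-policy second moment. -/
lemma M_le [Nonempty S] [Nonempty A] (p : S → A → S → ℝ) (r : S → A → ℝ)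
    (hp0 : ∀ s a s', 0 ≤ p s a s') (hp1 : ∀ s a, ∑ s' : S, p s a s' = 1)
    (T : ℕ) (K : ℕ) (hK : 0 < K) (π : Fin K → ℕ → S → A → ℝ)
    (hπ : ∀ k t s, t < T → (∀ a, 0 ≤ π k t s a) ∧ (∑ a : A, π k t s a = 1))
    (hwbar : ∀ t, t < T → ∀ (s : S) (a : A),
      0 < (∑ j : Fin K, wRL p r K π T j t s a) / K)
    (hlo : ∀ t, t < T → 0 < etaLoRL p r K π T t)
    (hcond : ∀ (k : Fin K) (t : ℕ), t < T → ∀ s : S,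
      Real.sqrt (etaHiRL p r K π T t / etaLoRL p r K π T t) *
          (∑ a : A, π k t s a * Real.sqrt (hq p r (π k) T t s a)) ^ 2
        ≤ ∑ a : A, π k t s a * hq p r (π k) T t s a) :
    ∀ (n : ℕ) (k : Fin K) (t : ℕ) (s : S), t + n = T →
      Etraj p (hmu p r K π T) n t s
          (fun l => pdisF r (π k) (hmu p r K π T) t s l ^ 2)
        ≤ Etraj p (π k) n t s (fun l => pdisF r (π k) (π k) t s l ^ 2) := by
  have hμpos : ∀ t' s' a, t' < T → 0 < hmu p r K π T t' s' a := by
    intro t' s' a ht'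
    have hS : ∀ b : A, 0 < ∑ j : Fin K, π j t' s' b ^ 2 * hq p r (π j) T t' s' b := by
      intro b
      have h1 := hwbar t' ht' s' b
      have hKR : (0:ℝ) < K := by exact_mod_cast hK
      have := (div_pos_iff.1 h1)
      rcases this with ⟨h2, _⟩ | ⟨_, h3⟩
      · exact h2
      · exact absurd hKR (not_lt.2 h3.le)
    exact (hmu_eq_pos p r K π T t' s' hS a).2
  have hμ1 : ∀ t' s', ∑ a : A, hmu p r K π T t' s' a = 1 := fun t' s' =>
    hmu_sum_one p r K π T t' s'
  intro n
  induction n with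
  | zero =>
    intro k t s h
    rw [Etraj_zero', Etraj_zero']
    exact le_rfl
  | succ n ih =>
    intro k t s hTt
    have ht : t < T := by omega
    set μ := hmu p r K π T with hμdef
    have hwinμ : ∀ t' s', t + 1 ≤ t' → t' < t + 1 + n →
        (∀ b, π k t' s' b ≠ 0 → μ t' s' b ≠ 0) ∧
        (∑ b : A, μ t' s' b = 1) ∧ (∑ b : A, π k t' s' b = 1) := by
      intro t' s' h1 h2
      have ht' : t' < T := by omega
      exact ⟨fun b _ => ne_of_gt (hμpos t' s' b ht'), hμ1 t' s', (hπ k t' s' ht').2⟩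
    have hwinπ : ∀ t' s', t + 1 ≤ t' → t' < t + 1 + n →
        (∀ b, π k t' s' b ≠ 0 → π k t' s' b ≠ 0) ∧
        (∑ b : A, π k t' s' b = 1) ∧ (∑ b : A, π k t' s' b = 1) := by
      intro t' s' h1 h2
      have ht' : t' < T := by omega
      exact ⟨fun b hb => hb, (hπ k t' s' ht').2, (hπ k t' s' ht').2⟩
    have hn : T - (t + 1) = n := by omega
    set v : S → ℝ := fun s' => Etraj p (π k) n (t+1) s' (retF r s') with hvdef
    set Mπ : S → ℝ := fun s' =>
      Etraj p (π k) n (t+1) s' (fun l => pdisF r (π k) (π k) (t+1) s' l ^ 2) with hMπdef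
    set Mμ : S → ℝ := fun s' =>
      Etraj p μ n (t+1) s' (fun l => pdisF r (π k) μ (t+1) s' l ^ 2) with hMμdef
    have hQ : ∀ a, hq p r (π k) T t s a
        = ∑ s' : S, p s a s' * (r s a ^ 2 + 2 * r s a * v s' + Mπ s') := by
      intro a
      rw [hq_eq p r hp1 T (π k) (fun t' s' ht' => hπ k t' s' ht') t ht s a, hn]
    have hIH : ∀ s' : S, Mμ s' ≤ Mπ s' := fun s' => ih k (t+1) s' (by omega)
    -- expand LHS
    rw [Etraj_sq_expand p r hp1 (π k) μ n t s hwinμ]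
    rw [Etraj_sq_expand p r hp1 (π k) (π k) n t s hwinπ]
    -- RHS equals ∑ a, π * hq
    have hRHS : (∑ a : A, ∑ s' : S, π k t s a * p s a s' * ((π k t s a / π k t s a) ^ 2 *
          (r s a ^ 2 + 2 * r s a * Etraj p (π k) n (t+1) s' (retF r s')
            + Etraj p (π k) n (t+1) s' (fun l => pdisF r (π k) (π k) (t+1) s' l ^ 2))))
        = ∑ a : A, π k t s a * hq p r (π k) T t s a := by
      refine Finset.sum_congr rfl fun a _ => ?_
      rcases eq_or_ne (π k t s a) 0 with h0 | h0
      · simp [h0]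
      · rw [div_self h0, one_pow, hQ a, Finset.mul_sum]
        refine Finset.sum_congr rfl fun s' _ => ?_
        ring
    rw [hRHS]
    -- bound LHS
    have step1 : (∑ a : A, ∑ s' : S, μ t s a * p s a s' * ((π k t s a / μ t s a) ^ 2 *
          (r s a ^ 2 + 2 * r s a * Etraj p (π k) n (t+1) s' (retF r s')
            + Etraj p μ n (t+1) s' (fun l => pdisF r (π k) μ (t+1) s' l ^ 2))))
        ≤ ∑ a : A, π k t s a ^ 2 * hq p r (π k) T t s a / μ t s a := by
      have hμt : ∀ a, 0 < μ t s a := fun a => hμpos t s a ht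
      calc (∑ a : A, ∑ s' : S, μ t s a * p s a s' * ((π k t s a / μ t s a) ^ 2 *
            (r s a ^ 2 + 2 * r s a * v s' + Mμ s')))
          ≤ ∑ a : A, ∑ s' : S, μ t s a * p s a s' * ((π k t s a / μ t s a) ^ 2 *
            (r s a ^ 2 + 2 * r s a * v s' + Mπ s')) := by
            refine Finset.sum_le_sum fun a _ => Finset.sum_le_sum fun s' _ => ?_
            refine mul_le_mul_of_nonneg_left ?_
              (mul_nonneg (hμt a).le (hp0 s a s'))
            exact mul_le_mul_of_nonneg_left (add_le_add le_rfl (hIH s')) (sq_nonneg _)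
        _ = ∑ a : A, π k t s a ^ 2 * hq p r (π k) T t s a / μ t s a := by
            refine Finset.sum_congr rfl fun a _ => ?_
            rw [hQ a]
            rw [Finset.mul_sum, Finset.sum_div]
            refine Finset.sum_congr rfl fun s' _ => ?_
            have hμne : μ t s a ≠ 0 := ne_of_gt (hμt a)
            field_simp
    refine le_trans step1 ?_
    exact key_ineq p r T K hK π k t s (hwbar t ht) (hlo t ht) (hcond k t ht s)
      (hπ k t s ht).1
end aux3

/-- per-policy variance reduction (RL setting, single-trajectory comparison):
under the similarity condition, for every `k`, `t ∈ {0,…,T-1}` and state `s`,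
`V(G^PDIS_k(τ^{ĥμ_{t:T-1}}) | S_t = s) ≤ V(G^PDIS_k(τ^{π^(k)_{t:T-1}}) | S_t = s)`. -/
theorem stmt14 {S A : Type*} [Fintype S] [Fintype A] [Nonempty S] [Nonempty A]
    (p : S → A → S → ℝ) (r : S → A → ℝ)
    (hp0 : ∀ s a s', 0 ≤ p s a s') (hp1 : ∀ s a, ∑ s' : S, p s a s' = 1)
    (T : ℕ) (hT : 1 ≤ T)
    (K : ℕ) (hK : 0 < K) (π : Fin K → ℕ → S → A → ℝ)
    (hπ : ∀ k t s, t < T → (∀ a, 0 ≤ π k t s a) ∧ (∑ a : A, π k t s a = 1))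
    (hwbar : ∀ t, t < T → ∀ (s : S) (a : A),
      0 < (∑ j : Fin K, wRL p r K π T j t s a) / K)
    (hlo : ∀ t, t < T → 0 < etaLoRL p r K π T t)
    (hcond : ∀ (k : Fin K) (t : ℕ), t < T → ∀ s : S,
      Real.sqrt (etaHiRL p r K π T t / etaLoRL p r K π T t) *
          (∑ a : A, π k t s a * Real.sqrt (hq p r (π k) T t s a)) ^ 2
        ≤ ∑ a : A, π k t s a * hq p r (π k) T t s a) :
    ∀ (k : Fin K) (t : ℕ), t < T → ∀ s : S,
      Vpdis p r (π k) (hmu p r K π T) T t s ≤ Vpdis p r (π k) (π k) T t s := by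
  intro k t ht s
  have hμpos : ∀ t' s' a, t' < T → 0 < hmu p r K π T t' s' a := by
    intro t' s' a ht'
    have hS : ∀ b : A, 0 < ∑ j : Fin K, π j t' s' b ^ 2 * hq p r (π j) T t' s' b := by
      intro b
      have h1 := hwbar t' ht' s' b
      have hKR : (0:ℝ) < K := by exact_mod_cast hK
      rcases div_pos_iff.1 h1 with ⟨h2, _⟩ | ⟨_, h3⟩
      · exact h2
      · exact absurd hKR (not_lt.2 h3.le)
    exact (hmu_eq_pos p r K π T t' s' hS a).2
  have hwinμ : ∀ t' s', t ≤ t' → t' < t + (T - t) →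
      (∀ b, π k t' s' b ≠ 0 → hmu p r K π T t' s' b ≠ 0) ∧
      (∑ b : A, hmu p r K π T t' s' b = 1) ∧ (∑ b : A, π k t' s' b = 1) := by
    intro t' s' h1 h2
    have ht' : t' < T := by omega
    exact ⟨fun b _ => ne_of_gt (hμpos t' s' b ht'),
      hmu_sum_one p r K π T t' s', (hπ k t' s' ht').2⟩
  have hwinπ : ∀ t' s', t ≤ t' → t' < t + (T - t) →
      (∀ b, π k t' s' b ≠ 0 → π k t' s' b ≠ 0) ∧
      (∑ b : A, π k t' s' b = 1) ∧ (∑ b : A, π k t' s' b = 1) := by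
    intro t' s' h1 h2
    have ht' : t' < T := by omega
    exact ⟨fun b hb => hb, (hπ k t' s' ht').2, (hπ k t' s' ht').2⟩
  have hEμ : Epdis p r (π k) (hmu p r K π T) T t s
      = Etraj p (π k) (T - t) t s (retF r s) :=
    Etraj_pdis p r hp1 (π k) (hmu p r K π T) (T - t) t s hwinμ
  have hEπ : Epdis p r (π k) (π k) T t s
      = Etraj p (π k) (T - t) t s (retF r s) :=
    Etraj_pdis p r hp1 (π k) (π k) (T - t) t s hwinπ
  have hM := M_le p r hp0 hp1 T K hK π hπ hwbar hlo hcond (T - t) k t s (by omega)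
  simp only [Vpdis]
  rw [hEμ, hEπ]
  exact sub_le_sub_right hM _
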